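/- Two matrices A, B in gl(2,ℂ) have a common eigenvector if and only if det([A,B]) = 0. -/

import Mathlib

private lemma gl2_sq_zero (C : Matrix (Fin 2) (Fin 2) ℂ) (h1 : C.trace = 0)
    (h2 : C.det = 0) : C * C = 0 := by
  rw [Matrix.trace_fin_two] at h1
  rw [Matrix.det_fin_two] at h2
  ext i j
  fin_cases i <;> fin_cases j <;> simp [Matrix.mul_apply, Fin.sum_univ_two]
  · linear_combination C 0 0 * h1 - h2
  · linear_combination C 0 1 * h1
  · linear_combination C 1 0 * h1
  · linear_combination C 1 1 * h1 - h2

private lemma gl2_cmc (C M : Matrix (Fin 2) (Fin 2) ℂ) (h1 : C.trace = 0) (h2 : C.det = 0)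
    (h3 : (M * C).trace = 0) : C * M * C = 0 := by
  rw [Matrix.trace_fin_two] at h1
  rw [Matrix.det_fin_two] at h2
  rw [Matrix.trace_fin_two] at h3
  simp only [Matrix.mul_apply, Fin.sum_univ_two] at h3
  have hw : C 1 1 = -(C 0 0) := by linear_combination h1
  ext i j
  fin_cases i <;> fin_cases j <;> simp [Matrix.mul_apply, Fin.sum_univ_two, hw] <;>
    rw [hw] at h2 h3
  · linear_combination C 0 0 * h3 - M 1 1 * h2
  · linear_combination C 0 1 * h3 + M 0 1 * h2
  · linear_combination C 1 0 * h3 + M 1 0 * h2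
  · linear_combination (-(C 0 0)) * h3 - M 0 0 * h2

private lemma gl2_cross_zero (C : Matrix (Fin 2) (Fin 2) ℂ) (hC : C ≠ 0) (x y : Fin 2 → ℂ)
    (hx : C.mulVec x = 0) (hy : C.mulVec y = 0) : x 0 * y 1 = x 1 * y 0 := by
  have hx0 := congrFun hx 0
  have hx1 := congrFun hx 1
  have hy0 := congrFun hy 0
  have hy1 := congrFun hy 1
  simp [Matrix.mulVec, dotProduct, Fin.sum_univ_two] at hx0 hx1 hy0 hy1
  have hne : ∃ i j, C i j ≠ 0 := by
    by_contra h
    push_neg at h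
    exact hC (by ext i j; simpa using h i j)
  obtain ⟨i, j, hij⟩ := hne
  have key : C i j * (x 0 * y 1 - x 1 * y 0) = 0 := by
    fin_cases i <;> fin_cases j <;> simp only [Fin.mk_zero, Fin.mk_one, Fin.isValue]
    · linear_combination y 1 * hx0 - x 1 * hy0
    · linear_combination x 0 * hy0 - y 0 * hx0
    · linear_combination y 1 * hx1 - x 1 * hy1
    · linear_combination x 0 * hy1 - y 0 * hx1
  rcases mul_eq_zero.mp key with h | h
  · exact absurd h hij
  · linear_combination h

private lemma gl2_exists_smul (x y : Fin 2 → ℂ) (hx : x ≠ 0) (h : x 0 * y 1 = x 1 * y 0) :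
    ∃ c : ℂ, y = c • x := by
  have : x 0 ≠ 0 ∨ x 1 ≠ 0 := by
    by_contra hc
    push_neg at hc
    exact hx (by ext i; fin_cases i <;> simp [hc.1, hc.2])
  rcases this with h0 | h1
  · refine ⟨y 0 / x 0, ?_⟩
    ext i; fin_cases i <;> simp only [Pi.smul_apply, smul_eq_mul]
    · simp only [Fin.zero_eta, Fin.isValue]; field_simp
    · simp only [Fin.mk_one, Fin.isValue]; field_simp; linear_combination h
  · refine ⟨y 1 / x 1, ?_⟩
    ext i; fin_cases i <;> simp only [Pi.smul_apply, smul_eq_mul]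
    · simp only [Fin.zero_eta, Fin.isValue]; field_simp; linear_combination -h
    · simp only [Fin.mk_one, Fin.isValue]; field_simp

private lemma gl2_exists_eig (M : Matrix (Fin 2) (Fin 2) ℂ) :
    ∃ a : ℂ, ∃ v : Fin 2 → ℂ, v ≠ 0 ∧ M.mulVec v = a • v := by
  obtain ⟨a, ha⟩ := Module.End.exists_eigenvalue (Matrix.mulVecLin M)
  obtain ⟨v, hv⟩ := ha.exists_hasEigenvector
  exact ⟨a, v, hv.2, hv.apply_eq_smul⟩

/-- Shemesh's criterion for 2×2 matrices: two matrices `A, B ∈ gl(2,ℂ)` have a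
common eigenvector if and only if `det [A,B] = 0`. -/
theorem gl2_common_eigenvector_iff_det_commutator_eq_zero
    (A B : Matrix (Fin 2) (Fin 2) ℂ) :
    (∃ v : Fin 2 → ℂ, v ≠ 0 ∧ ∃ a b : ℂ, A.mulVec v = a • v ∧ B.mulVec v = b • v) ↔
      (A * B - B * A).det = 0 := by
  constructor
  · rintro ⟨v, hv, a, b, hA, hB⟩
    have hker : (A * B - B * A).mulVec v = 0 := by
      rw [Matrix.sub_mulVec, ← Matrix.mulVec_mulVec, ← Matrix.mulVec_mulVec, hA, hB,
        Matrix.mulVec_smul, Matrix.mulVec_smul, hA, hB, smul_smul, smul_smul, mul_comm,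
        sub_self]
    exact (Matrix.exists_mulVec_eq_zero_iff).mp ⟨v, hv, hker⟩
  · intro hdet
    set C := A * B - B * A with hCdef
    have htr : C.trace = 0 := by
      rw [hCdef, Matrix.trace_sub, Matrix.trace_mul_comm, sub_self]
    by_cases hC : C = 0
    · -- commuting case
      have hAB : A * B = B * A := by
        have := sub_eq_zero.mp hC
        exact this
      obtain ⟨a, v, hv, hAv⟩ := gl2_exists_eig A
      by_cases hA1 : A - a • 1 = 0
      · obtain ⟨b, w, hw, hBw⟩ := gl2_exists_eig B
        refine ⟨w, hw, a, b, ?_, hBw⟩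
        have : A = a • 1 := sub_eq_zero.mp hA1
        rw [this, Matrix.smul_mulVec, Matrix.one_mulVec]
      · set D := A - a • 1 with hDdef
        have hDv : D.mulVec v = 0 := by
          rw [hDdef, Matrix.sub_mulVec, hAv, Matrix.smul_mulVec, Matrix.one_mulVec,
            sub_self]
        have hDB : D * B = B * D := by
          rw [hDdef, sub_mul, mul_sub, hAB, Matrix.smul_mul, Matrix.mul_smul, one_mul, mul_one]
        have hDBv : D.mulVec (B.mulVec v) = 0 := by
          rw [Matrix.mulVec_mulVec, hDB, ← Matrix.mulVec_mulVec, hDv, Matrix.mulVec_zero]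
        obtain ⟨b, hb⟩ := gl2_exists_smul v (B.mulVec v) hv
          (gl2_cross_zero D hA1 v (B.mulVec v) hDv hDBv)
        exact ⟨v, hv, a, b, hAv, hb⟩
    · -- C ≠ 0 case
      have hsq : C * C = 0 := gl2_sq_zero C htr hdet
      have htrA : (A * C).trace = 0 := by
        rw [hCdef]
        simp [Matrix.trace_fin_two, Matrix.mul_apply, Fin.sum_univ_two]
        ring
      have htrB : (B * C).trace = 0 := by
        rw [hCdef]
        simp [Matrix.trace_fin_two, Matrix.mul_apply, Fin.sum_univ_two]
        ring
      have hcA : C * A * C = 0 := gl2_cmc C A htr hdet htrA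
      have hcB : C * B * C = 0 := gl2_cmc C B htr hdet htrB
      obtain ⟨u, hu⟩ : ∃ u : Fin 2 → ℂ, C.mulVec u ≠ 0 := by
        by_contra h
        push_neg at h
        apply hC
        ext i j
        have := congrFun (h (Pi.single j 1)) i
        simpa [Matrix.mulVec_single] using this
      set w := C.mulVec u with hwdef
      have hw2 : C.mulVec w = 0 := by
        rw [hwdef, Matrix.mulVec_mulVec, hsq, Matrix.zero_mulVec]
      have hAw : C.mulVec (A.mulVec w) = 0 := by
        rw [hwdef, Matrix.mulVec_mulVec, Matrix.mulVec_mulVec, hcA,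
          Matrix.zero_mulVec]
      have hBw : C.mulVec (B.mulVec w) = 0 := by
        rw [hwdef, Matrix.mulVec_mulVec, Matrix.mulVec_mulVec, hcB,
          Matrix.zero_mulVec]
      obtain ⟨a, ha⟩ := gl2_exists_smul w (A.mulVec w) hu
        (gl2_cross_zero C hC w (A.mulVec w) hw2 hAw)
      obtain ⟨b, hb⟩ := gl2_exists_smul w (B.mulVec w) hu
        (gl2_cross_zero C hC w (B.mulVec w) hw2 hBw)
      exact ⟨w, hu, a, b, ha, hb⟩
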